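/- Let J be an unbounded subinterval of ℝ and g : J → ℝ a locally absolutely continuous function with derivative g′ ∈ L^α(J) for some α > 1, and suppose the total variation of g′ on the interval with endpoints a and b is at most V_J·|b − a|^r for all a, b ∈ J, where V_J > 0 and r ∈ (0,1]. Then for every b ∈ J and every λ > 0, |g′(b)| ≤ ‖g′‖_{J,α}/λ^{1/α} + V_J·λ^r (using that, since J is unbounded, for every b ∈ J and λ > 0 there exists a ∈ J with |b − a| = λ, together with Hölder's inequality |g(b) − g(a)| ≤ |b − a|^{1/β}‖g′‖_{J,α} with 1/α + 1/β = 1). -/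

import Mathlib

open MeasureTheory Set ENNReal

/-- The key pointwise estimate of Theorem 5: for every `b ∈ J` and `λ > 0`,
`|g'(b)| ≤ ‖g'‖_{J,α}/λ^{1/α} + V λ^r`. -/
theorem landau_pointwise_estimate_Lalpha
    (J : Set ℝ) (hJ : J.OrdConnected) (hJu : ¬ Bornology.IsBounded J)
    (g g' : ℝ → ℝ) (α : ℝ) (hα : 1 < α)
    (hderiv : ∀ x ∈ J, HasDerivWithinAt g (g' x) J x)
    (hg'α : MemLp g' (ENNReal.ofReal α) (volume.restrict J))
    (V r : ℝ) (hV : 0 < V) (hr : r ∈ Ioc (0 : ℝ) 1)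
    (hvar : ∀ a ∈ J, ∀ b ∈ J,
      eVariationOn g' (uIcc a b) ≤ ENNReal.ofReal (V * |b - a| ^ r)) :
    ∀ b ∈ J, ∀ l : ℝ, 0 < l →
      |g' b| ≤ (eLpNorm g' (ENNReal.ofReal α) (volume.restrict J)).toReal / l ^ α⁻¹ +
        V * l ^ r := by
  intro b hb l hl
  -- find an interval of length l inside J containing b
  obtain ⟨x, hxb, hsJ⟩ : ∃ x : ℝ, b ∈ Icc x (x + l) ∧ Icc x (x + l) ⊆ J := by
    rw [isBounded_iff_bddBelow_bddAbove, not_and_or] at hJu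
    rcases hJu with h | h
    · obtain ⟨c, hcJ, hc⟩ := not_bddBelow_iff.mp h (b - l)
      refine ⟨b - l, ⟨by linarith, by linarith⟩, fun t ht => ?_⟩
      exact hJ.out hcJ hb ⟨by linarith [ht.1], by linarith [ht.2]⟩
    · obtain ⟨c, hcJ, hc⟩ := not_bddAbove_iff.mp h (b + l)
      refine ⟨b, ⟨by linarith, by linarith⟩, fun t ht => ?_⟩
      exact hJ.out hb hcJ ⟨ht.1, by linarith [ht.2]⟩
  set s : Set ℝ := Icc x (x + l) with hs_def
  have hls : volume s = ENNReal.ofReal l := by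
    rw [hs_def, Real.volume_Icc]; ring_nf
  have heq : ∀ y : ℝ, ENNReal.ofReal |y| = (‖y‖₊ : ℝ≥0∞) := fun y => by
    rw [← Real.norm_eq_abs]; exact ofReal_norm y
  -- pointwise bound via the variation hypothesis
  have key : ∀ t ∈ s, ENNReal.ofReal |g' b| ≤
      (‖g' t‖₊ : ℝ≥0∞) + ENNReal.ofReal (V * l ^ r) := by
    intro t ht
    have h1 : edist (g' b) (g' t) ≤ ENNReal.ofReal (V * l ^ r) := by
      calc edist (g' b) (g' t) ≤ eVariationOn g' (uIcc b t) :=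
            eVariationOn.edist_le g' left_mem_uIcc right_mem_uIcc
        _ ≤ ENNReal.ofReal (V * |t - b| ^ r) := hvar b hb t (hsJ ht)
        _ ≤ ENNReal.ofReal (V * l ^ r) := by
            apply ENNReal.ofReal_le_ofReal
            apply mul_le_mul_of_nonneg_left _ hV.le
            apply Real.rpow_le_rpow (abs_nonneg _) _ hr.1.le
            rw [abs_le]
            exact ⟨by linarith [ht.1, ht.2, hxb.1, hxb.2],
              by linarith [ht.1, ht.2, hxb.1, hxb.2]⟩
    have h2 : |g' b| ≤ |g' t| + dist (g' b) (g' t) := by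
      rw [Real.dist_eq]
      have := abs_sub_abs_le_abs_sub (g' b) (g' t)
      linarith
    calc ENNReal.ofReal |g' b| ≤ ENNReal.ofReal (|g' t| + dist (g' b) (g' t)) :=
          ENNReal.ofReal_le_ofReal h2
      _ = ENNReal.ofReal |g' t| + ENNReal.ofReal (dist (g' b) (g' t)) :=
          ENNReal.ofReal_add (abs_nonneg _) dist_nonneg
      _ ≤ _ := by
          rw [heq]
          exact add_le_add_right (by rw [← edist_dist]; exact h1) _
  -- integrate the pointwise bound over s
  have hint : ENNReal.ofReal |g' b| * ENNReal.ofReal l ≤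
      (∫⁻ t in s, (‖g' t‖₊ : ℝ≥0∞)) + ENNReal.ofReal (V * l ^ r) * ENNReal.ofReal l := by
    calc ENNReal.ofReal |g' b| * ENNReal.ofReal l
        = ∫⁻ _ in s, ENNReal.ofReal |g' b| := by
          rw [setLIntegral_const, hls]
      _ ≤ ∫⁻ t in s, ((‖g' t‖₊ : ℝ≥0∞) + ENNReal.ofReal (V * l ^ r)) :=
          lintegral_mono_ae ((ae_restrict_mem measurableSet_Icc).mono key)
      _ = _ := by
          rw [lintegral_add_right _ measurable_const, setLIntegral_const, hls]
  -- Hölder's inequality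
  have hmeas : AEStronglyMeasurable g' (volume.restrict s) :=
    hg'α.1.mono_measure (Measure.restrict_mono hsJ le_rfl)
  have hαpos : (0 : ℝ) < α := lt_trans one_pos hα
  have hold : (∫⁻ t in s, (‖g' t‖₊ : ℝ≥0∞)) ≤
      eLpNorm g' (ENNReal.ofReal α) (volume.restrict J) *
        ENNReal.ofReal l ^ (1 - α⁻¹) := by
    have h1 := eLpNorm_le_eLpNorm_mul_rpow_measure_univ (μ := volume.restrict s)
      (p := 1) (q := ENNReal.ofReal α) (ENNReal.one_le_ofReal.mpr hα.le) hmeas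
    rw [eLpNorm_one_eq_lintegral_enorm, Measure.restrict_apply_univ, hls] at h1
    have hexp : 1 / (1 : ℝ≥0∞).toReal - 1 / (ENNReal.ofReal α).toReal = 1 - α⁻¹ := by
      simp [ENNReal.toReal_ofReal hαpos.le, one_div]
    rw [hexp] at h1
    refine h1.trans (mul_le_mul_left ?_ _)
    exact eLpNorm_mono_measure g' (Measure.restrict_mono hsJ le_rfl)
  set N : ℝ := (eLpNorm g' (ENNReal.ofReal α) (volume.restrict J)).toReal with hN_def
  have hfin : eLpNorm g' (ENNReal.ofReal α) (volume.restrict J) ≠ ⊤ := hg'α.2.ne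
  have hN : 0 ≤ N := ENNReal.toReal_nonneg
  -- convert to a real inequality
  have hexp2 : (0:ℝ) ≤ 1 - α⁻¹ := by
    have : α⁻¹ ≤ 1 := by
      rw [inv_le_one_iff₀]; right; exact hα.le
    linarith
  have h4 : ENNReal.ofReal (|g' b| * l) ≤
      eLpNorm g' (ENNReal.ofReal α) (volume.restrict J) * ENNReal.ofReal l ^ (1 - α⁻¹)
        + ENNReal.ofReal (V * l ^ r) * ENNReal.ofReal l := by
    rw [ENNReal.ofReal_mul (abs_nonneg _)]
    exact hint.trans (add_le_add_left hold _)
  have hne1 : eLpNorm g' (ENNReal.ofReal α) (volume.restrict J) *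
      ENNReal.ofReal l ^ (1 - α⁻¹) ≠ ⊤ :=
    ENNReal.mul_ne_top hfin (ENNReal.rpow_ne_top_of_nonneg hexp2 ENNReal.ofReal_ne_top)
  have hne2 : ENNReal.ofReal (V * l ^ r) * ENNReal.ofReal l ≠ ⊤ :=
    ENNReal.mul_ne_top ENNReal.ofReal_ne_top ENNReal.ofReal_ne_top
  have main : |g' b| * l ≤ N * l ^ (1 - α⁻¹) + V * l ^ r * l := by
    calc |g' b| * l = (ENNReal.ofReal (|g' b| * l)).toReal :=
          (ENNReal.toReal_ofReal (by positivity)).symm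
      _ ≤ _ := ENNReal.toReal_mono (by rw [Ne, ENNReal.add_eq_top]; tauto) h4
      _ = N * l ^ (1 - α⁻¹) + V * l ^ r * l := by
          rw [ENNReal.toReal_add hne1 hne2, ENNReal.toReal_mul, ENNReal.toReal_mul,
            ← ENNReal.toReal_rpow, ENNReal.toReal_ofReal hl.le,
            ENNReal.toReal_ofReal (by positivity), hN_def]
  rw [Real.rpow_sub hl, Real.rpow_one] at main
  have h3 : |g' b| * l ≤ (N / l ^ α⁻¹ + V * l ^ r) * l := by
    rw [add_mul, div_mul_eq_mul_div, mul_div_assoc]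
    exact main
  exact le_of_mul_le_mul_right h3 hl
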